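/- For every positive integer n, (X_1+1)^n ∏_{q=2}^n (1+(X_1+1)X_q) − ∏_{q=2}^n (1+(X_q+1)X_1) = ∑_{j=0}^{n-1} ((X_1+1)^{n+j} − X_1^j (X_1+1)^{n-j-1}) · e_j(X_2,…,X_n), where e_j is the j-th elementary symmetric polynomial. -/

import Mathlib

open MvPolynomial

lemma key_prod_esymm {α ι : Type*} [CommRing α] [DecidableEq ι] (s : Finset ι) (a b : α)
    (f : ι → α) :
    ∏ i ∈ s, (a + b * f i) =
      ∑ j ∈ Finset.range (s.card + 1),
        a ^ (s.card - j) * b ^ j * ∑ t ∈ Finset.powersetCard j s, ∏ i ∈ t, f i := by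
  have h : ∀ i ∈ s, a + b * f i = b * f i + a := fun i _ => by ring
  rw [Finset.prod_congr rfl h, Finset.prod_add, Finset.powerset_card_disjiUnion]
  erw [Finset.sum_disjiUnion]
  refine Finset.sum_congr rfl fun j hj => ?_
  rw [Finset.mul_sum, Finset.sum_congr rfl]
  intro t ht
  obtain ⟨hts, htc⟩ := Finset.mem_powersetCard.mp ht
  rw [Finset.prod_mul_distrib, Finset.prod_const, Finset.prod_const,
    Finset.card_sdiff_of_subset hts, htc]
  ring

theorem poly_esymm_expansion (n : ℕ) (hn : 0 < n) :
    (X (⟨0, hn⟩ : Fin n) + 1) ^ n *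
        ∏ q ∈ Finset.univ.filter (fun q : Fin n => q ≠ ⟨0, hn⟩),
          (1 + (X (⟨0, hn⟩ : Fin n) + 1) * X q) -
      ∏ q ∈ Finset.univ.filter (fun q : Fin n => q ≠ ⟨0, hn⟩),
          (1 + (X q + 1) * X (⟨0, hn⟩ : Fin n))
    = ∑ j ∈ Finset.range n,
        ((X (⟨0, hn⟩ : Fin n) + 1) ^ (n + j) -
            X (⟨0, hn⟩ : Fin n) ^ j * (X (⟨0, hn⟩ : Fin n) + 1) ^ (n - j - 1)) *
          ∑ t ∈ Finset.powersetCard j (Finset.univ.filter (fun q : Fin n => q ≠ ⟨0, hn⟩)),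
            ∏ i ∈ t, (X i : MvPolynomial (Fin n) ℂ) := by
  set x : MvPolynomial (Fin n) ℂ := X (⟨0, hn⟩ : Fin n) with hx
  set S : Finset (Fin n) := Finset.univ.filter (fun q : Fin n => q ≠ ⟨0, hn⟩) with hS
  have hcard : S.card = n - 1 := by
    have : S = Finset.univ.erase (⟨0, hn⟩ : Fin n) := by
      ext q; simp [hS, Finset.mem_erase]
    rw [this, Finset.card_erase_of_mem (Finset.mem_univ _), Finset.card_univ, Fintype.card_fin]
  have hrange : S.card + 1 = n := by omega
  have h1 : ∏ q ∈ S, (1 + (x + 1) * X q) =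
      ∑ j ∈ Finset.range n, (x + 1) ^ j *
        ∑ t ∈ Finset.powersetCard j S, ∏ i ∈ t, (X i : MvPolynomial (Fin n) ℂ) := by
    rw [key_prod_esymm S 1 (x + 1) X, hrange]
    exact Finset.sum_congr rfl fun j hj => by rw [one_pow, one_mul]
  have h2 : ∏ q ∈ S, (1 + (X q + 1) * x) =
      ∑ j ∈ Finset.range n, (x + 1) ^ (n - 1 - j) * x ^ j *
        ∑ t ∈ Finset.powersetCard j S, ∏ i ∈ t, (X i : MvPolynomial (Fin n) ℂ) := by
    have h : ∀ q ∈ S, 1 + (X q + 1) * x = (x + 1) + x * X q := fun q _ => by ring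
    rw [Finset.prod_congr rfl h, key_prod_esymm S (x + 1) x X, hrange, hcard]
  rw [h1, h2, Finset.mul_sum, ← Finset.sum_sub_distrib]
  refine Finset.sum_congr rfl fun j hj => ?_
  have : n - j - 1 = n - 1 - j := by omega
  rw [this, pow_add]
  ring
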